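/- A subalgebra Γ ⊆ k^{t×t} is a basic matrix algebra if and only if Γ is a reduced matrix algebra with respect to the block partition (1,1,…,1) into t blocks of size 1; i.e., the set of basic t×t matrix algebras coincides with the set of reduced matrix algebras all of whose blocks are 1×1. -/

import Mathlib

open Matrix

/-- `Γ ⊆ k^{t×t}` is a *basic matrix algebra*: a subalgebra consisting of upper
triangular matrices such that whenever a matrix belongs to `Γ`, the diagonal matrix
with the same diagonal entries also belongs to `Γ`. -/
def IsBasicMatrixAlgebra {k : Type*} [Field k] {t : ℕ}
    (Γ : Subalgebra k (Matrix (Fin t) (Fin t) k)) : Prop :=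
  (∀ A ∈ Γ, A.BlockTriangular (id : Fin t → Fin t)) ∧
  (∀ A ∈ Γ, Matrix.diagonal (fun i => A i i) ∈ Γ)

/-- `Λ ⊆ k^{t×t}` is a reduced matrix algebra with respect to the block partition
`(1,1,…,1)` into `t` blocks of size `1`: there are an equivalence relation `r` on
`{1,…,t}` and a finite family of linear relations, each coupling only entries `(i,j)`
with `i < j` lying in a single pair of equivalence classes, such that `Λ` consists
exactly of the matrices `S = [s_ij]` with `s_ij = 0` for `i > j`, `s_ii = s_jj`
whenever `r i j`, and `∑ c^{(l)}_{ij} s_ij = 0` for every relation `l`. -/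
def IsReducedOnesMatrixAlgebra {k : Type*} [Field k] {t : ℕ}
    (Λ : Set (Matrix (Fin t) (Fin t) k)) : Prop :=
  ∃ r : Fin t → Fin t → Prop, Equivalence r ∧
  ∃ (q : ℕ) (c : Fin q → Fin t → Fin t → k),
    (∀ l i j, c l i j ≠ 0 → i < j) ∧
    (∀ l i j i' j', c l i j ≠ 0 → c l i' j' ≠ 0 → r i i' ∧ r j j') ∧
    (∀ M : Matrix (Fin t) (Fin t) k, M ∈ Λ ↔
      ((∀ i j : Fin t, j < i → M i j = 0) ∧
       (∀ i j : Fin t, r i j → M i i = M j j) ∧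
       (∀ l : Fin q, (∑ i : Fin t, ∑ j : Fin t, c l i j * M i j) = 0)))

namespace BasicReducedAux

variable {k : Type*} [Field k] {t : ℕ} (Γ : Subalgebra k (Matrix (Fin t) (Fin t) k))

/-- The equivalence relation: `i ∼ j` iff every matrix of `Γ` has equal `(i,i)` and
`(j,j)` entries. -/
def rrel (i j : Fin t) : Prop := ∀ A ∈ Γ, A i i = A j j

lemma rrel_equiv : Equivalence (rrel Γ) :=
  ⟨fun _ _ _ => rfl, fun h A hA => (h A hA).symm, fun h1 h2 A hA => (h1 A hA).trans (h2 A hA)⟩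

open Classical in
/-- A canonical representative of the `rrel`-class of `i`. -/
noncomputable def rep (i : Fin t) : Fin t :=
  (Finset.univ.filter (fun j => rrel Γ i j)).min'
    ⟨i, by simp [rrel_equiv Γ |>.refl i]⟩

lemma rrel_rep (i : Fin t) : rrel Γ i (rep Γ i) := by
  classical
  have := Finset.min'_mem (Finset.univ.filter (fun j => rrel Γ i j))
    ⟨i, by simp [rrel_equiv Γ |>.refl i]⟩
  simpa [rep] using (Finset.mem_filter.mp this).2

private lemma min'_congr {α : Type*} [LinearOrder α] (s s' : Finset α) (h : s = s')
    (hs : s.Nonempty) : s.min' hs = s'.min' (h ▸ hs) := by subst h; rfl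

lemma rep_eq_of_rrel {i j : Fin t} (h : rrel Γ i j) : rep Γ i = rep Γ j := by
  classical
  have hset : (Finset.univ.filter (fun x => rrel Γ i x)) =
      (Finset.univ.filter (fun x => rrel Γ j x)) := by
    apply Finset.filter_congr
    intro x _
    constructor
    · intro hix; exact (rrel_equiv Γ).trans ((rrel_equiv Γ).symm h) hix
    · intro hjx; exact (rrel_equiv Γ).trans h hjx
  exact min'_congr _ _ hset _

lemma rep_rep (i : Fin t) : rep Γ (rep Γ i) = rep Γ i :=
  (rep_eq_of_rrel Γ (rrel_rep Γ i)).symm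

lemma rrel_of_rep_eq {i j : Fin t} (h : rep Γ i = rep Γ j) : rrel Γ i j := by
  have h1 := rrel_rep Γ i
  have h2 := rrel_rep Γ j
  rw [← h] at h2
  exact (rrel_equiv Γ).trans h1 ((rrel_equiv Γ).symm h2)

lemma rep_eq_iff {a : Fin t} (ha : rep Γ a = a) (i : Fin t) :
    rep Γ i = a ↔ rrel Γ a i := by
  constructor
  · intro h
    exact (rrel_equiv Γ).symm (rrel_of_rep_eq Γ (h.trans ha.symm))
  · intro h
    rw [rep_eq_of_rrel Γ ((rrel_equiv Γ).symm h), rep_eq_of_rrel Γ h] at *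
    exact ha

lemma diag_prod_mem {ι : Type*} (s : Finset ι) (g : ι → Fin t → k)
    (h : ∀ j ∈ s, diagonal (g j) ∈ Γ) :
    diagonal (fun i => ∏ j ∈ s, g j i) ∈ Γ := by
  classical
  induction s using Finset.induction with
  | empty => simpa using Γ.one_mem
  | @insert a s ha ih =>
    have hfe : (fun i => ∏ j ∈ insert a s, g j i)
        = fun i => g a i * ∏ j ∈ s, g j i := by
      funext i; rw [Finset.prod_insert ha]
    rw [hfe, ← Matrix.diagonal_mul_diagonal]
    exact Γ.mul_mem (h a (Finset.mem_insert_self a s))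
      (ih fun j hj => h j (Finset.mem_insert_of_mem hj))

open Classical in
lemma indicator_mem (hdiag : ∀ A ∈ Γ, diagonal (fun i => A i i) ∈ Γ) (a : Fin t) :
    diagonal (fun i => if rrel Γ a i then (1 : k) else 0) ∈ Γ := by
  classical
  have hex : ∀ j : Fin t, ¬ rrel Γ a j → ∃ A, A ∈ Γ ∧ A a a ≠ A j j := by
    intro j hj
    by_contra hc
    push_neg at hc
    exact hj fun A hA => hc A hA
  choose! A hAmem hAne using hex
  set S := Finset.univ.filter (fun j => ¬ rrel Γ a j) with hS
  set g : Fin t → Fin t → k :=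
    fun j i => (A j a a - A j j j)⁻¹ * (A j i i - A j j j) with hg
  have hgmem : ∀ j ∈ S, diagonal (g j) ∈ Γ := by
    intro j hj
    have hj' : ¬ rrel Γ a j := by simpa [hS] using hj
    have h1 : diagonal (fun i => A j i i) ∈ Γ := hdiag _ (hAmem j hj')
    have heq : diagonal (g j) = (A j a a - A j j j)⁻¹ •
        (diagonal (fun i => A j i i) - (A j j j) • (1 : Matrix (Fin t) (Fin t) k)) := by
      ext i i'
      by_cases h : i = i'
      · subst h
        simp [hg, Matrix.diagonal_apply_eq, Matrix.one_apply_eq, mul_comm, mul_sub]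
      · simp [hg, Matrix.diagonal_apply_ne _ h, Matrix.one_apply_ne h]
    rw [heq]
    exact Subalgebra.smul_mem _ (Subalgebra.sub_mem _ h1
      (Subalgebra.smul_mem _ (Subalgebra.one_mem _) _)) _
  have key : diagonal (fun i => ∏ j ∈ S, g j i) ∈ Γ := diag_prod_mem Γ S g hgmem
  have heq : (fun i => ∏ j ∈ S, g j i)
      = fun i => if rrel Γ a i then (1 : k) else 0 := by
    funext i
    by_cases hi : rrel Γ a i
    · rw [if_pos hi]
      apply Finset.prod_eq_one
      intro j hj
      have hj' : ¬ rrel Γ a j := by simpa [hS] using hj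
      have h1 : A j a a = A j i i := hi (A j) (hAmem j hj')
      have h2 : A j a a - A j j j ≠ 0 := sub_ne_zero.mpr (hAne j hj')
      rw [hg]
      simp only [← h1]
      exact inv_mul_cancel₀ h2
    · rw [if_neg hi]
      apply Finset.prod_eq_zero (show i ∈ S by simp [hS, hi])
      simp [hg]
  rw [← heq]
  exact key

lemma diag_mem (hdiag : ∀ A ∈ Γ, diagonal (fun i => A i i) ∈ Γ)
    (d : Fin t → k) (hd : ∀ i j, rrel Γ i j → d i = d j) :
    diagonal d ∈ Γ := by
  classical
  set R := Finset.univ.filter (fun a => rep Γ a = a) with hR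
  have hdec : diagonal d = ∑ a ∈ R,
      d a • diagonal (fun i => if rrel Γ a i then (1 : k) else 0) := by
    ext i j
    rw [Matrix.sum_apply]
    by_cases h : i = j
    · subst h
      rw [Matrix.diagonal_apply_eq]
      rw [Finset.sum_eq_single (rep Γ i)]
      · have h1 : rrel Γ (rep Γ i) i := (rrel_equiv Γ).symm (rrel_rep Γ i)
        have h2 : d i = d (rep Γ i) := hd _ _ (rrel_rep Γ i)
        simp [Matrix.smul_apply, Matrix.diagonal_apply_eq, h1, ← h2]
      · intro b hb hbne
        have hbR : rep Γ b = b := by simpa [hR] using hb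
        have : ¬ rrel Γ b i := by
          intro hcon
          exact hbne (((rep_eq_iff Γ hbR i).mpr hcon).symm ▸ rfl)
        simp [Matrix.smul_apply, Matrix.diagonal_apply_eq, this]
      · intro hnot
        exact absurd (by simp [hR, rep_rep Γ i]) hnot
    · rw [Matrix.diagonal_apply_ne _ h]
      apply (Finset.sum_eq_zero _).symm
      intro a _
      simp [Matrix.smul_apply, Matrix.diagonal_apply_ne _ h]
  rw [hdec]
  exact Subalgebra.sum_mem _ fun a _ =>
    Subalgebra.smul_mem _ (indicator_mem Γ hdiag a) _

open Classical in
/-- The linear projection picking out strictly-upper entries `(i,j)` with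
`rep i = a` and `rep j = b`. -/
noncomputable def proj (a b : Fin t) :
    Matrix (Fin t) (Fin t) k →ₗ[k] Matrix (Fin t) (Fin t) k where
  toFun M := Matrix.of fun i j =>
    if rep Γ i = a ∧ rep Γ j = b ∧ i < j then M i j else 0
  map_add' M N := by
    ext i j
    simp only [Matrix.of_apply, Matrix.add_apply]
    split <;> simp
  map_smul' c M := by
    ext i j
    simp only [Matrix.of_apply, Matrix.smul_apply, RingHom.id_apply]
    split <;> simp

open Classical in
lemma proj_apply (a b : Fin t) (M : Matrix (Fin t) (Fin t) k) (i j : Fin t) :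
    proj Γ a b M i j = if rep Γ i = a ∧ rep Γ j = b ∧ i < j then M i j else 0 := by
  simp [proj]

lemma proj_mem (hupper : ∀ A ∈ Γ, ∀ i j : Fin t, j < i → A i j = 0)
    (hdiag : ∀ A ∈ Γ, diagonal (fun i => A i i) ∈ Γ)
    (a b : Fin t) {M : Matrix (Fin t) (Fin t) k} (hM : M ∈ Γ) :
    proj Γ a b M ∈ Γ := by
  classical
  by_cases ha : rep Γ a = a
  · by_cases hb : rep Γ b = b
    · have hMd := hdiag M hM
      have hB : M - diagonal (fun i => M i i) ∈ Γ := Subalgebra.sub_mem _ hM hMd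
      have heq : proj Γ a b M =
          diagonal (fun i => if rrel Γ a i then (1 : k) else 0) *
            (M - diagonal fun i => M i i) *
            diagonal (fun i => if rrel Γ b i then (1 : k) else 0) := by
        ext i j
        rw [proj_apply, Matrix.mul_diagonal, Matrix.diagonal_mul, Matrix.sub_apply]
        simp only [rep_eq_iff Γ ha, rep_eq_iff Γ hb]
        by_cases h1 : rrel Γ a i
        · by_cases h2 : rrel Γ b j
          · simp only [h1, h2, true_and, if_true]
            rcases lt_trichotomy i j with h | h | h
            · rw [if_pos h, Matrix.diagonal_apply_ne _ (ne_of_lt h)]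
              ring
            · subst h
              rw [if_neg (lt_irrefl i), Matrix.diagonal_apply_eq]
              ring
            · rw [if_neg (asymm h), Matrix.diagonal_apply_ne _ (ne_of_gt h),
                hupper M hM i j h]
              ring
          · simp [h1, h2]
        · simp [h1]
      rw [heq]
      exact Γ.mul_mem (Γ.mul_mem (indicator_mem Γ hdiag a) hB) (indicator_mem Γ hdiag b)
    · have : proj Γ a b M = 0 := by
        ext i j
        rw [proj_apply]
        split_ifs with h
        · exact absurd (by rw [← h.2.1, rep_rep]) hb
        · rfl
      rw [this]; exact Subalgebra.zero_mem _
  · have : proj Γ a b M = 0 := by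
      ext i j
      rw [proj_apply]
      split_ifs with h
      · exact absurd (by rw [← h.1, rep_rep]) ha
      · rfl
    rw [this]; exact Subalgebra.zero_mem _

lemma proj_sum (M : Matrix (Fin t) (Fin t) k)
    (hupper : ∀ i j : Fin t, j < i → M i j = 0) :
    M = diagonal (fun i => M i i) + ∑ a : Fin t, ∑ b : Fin t, proj Γ a b M := by
  classical
  ext i j
  simp only [Matrix.add_apply, Matrix.sum_apply, proj_apply]
  rcases lt_trichotomy i j with h | h | h
  · rw [Matrix.diagonal_apply_ne _ (ne_of_lt h)]
    have hb : ∀ a : Fin t,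
        (∑ b : Fin t, if rep Γ i = a ∧ rep Γ j = b ∧ i < j then M i j else 0)
          = if rep Γ i = a then M i j else 0 := by
      intro a
      by_cases hai : rep Γ i = a
      · simp only [hai, true_and, h, and_true]
        simp
      · simp [hai]
    simp only [hb]
    simp
  · subst h
    rw [Matrix.diagonal_apply_eq]
    simp [lt_irrefl]
  · rw [Matrix.diagonal_apply_ne _ (ne_of_gt h), hupper i j h]
    have : ¬ i < j := asymm h
    simp [this]

end BasicReducedAux

open BasicReducedAux in
/-- A subalgebra of `k^{t×t}` is a basic matrix algebra if and only if it is a reduced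
matrix algebra with respect to the partition `(1,…,1)` into `t` blocks of size `1`. -/
theorem basic_iff_reduced_ones {k : Type*} [Field k] [IsAlgClosed k] {t : ℕ}
    (Γ : Subalgebra k (Matrix (Fin t) (Fin t) k)) :
    IsBasicMatrixAlgebra Γ ↔
      IsReducedOnesMatrixAlgebra (Γ : Set (Matrix (Fin t) (Fin t) k)) := by
  classical
  constructor
  · rintro ⟨hbt, hdiag⟩
    have hupper : ∀ A ∈ Γ, ∀ i j : Fin t, j < i → A i j = 0 :=
      fun A hA i j hij => hbt A hA hij
    refine ⟨rrel Γ, rrel_equiv Γ, ?_⟩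
    set V := Matrix (Fin t) (Fin t) k with hV
    let U : Fin t × Fin t → Submodule k V := fun p =>
      (Subalgebra.toSubmodule Γ).map (proj Γ p.1 p.2)
    have hUle : ∀ p, U p ≤ Subalgebra.toSubmodule Γ := by
      rintro p x ⟨y, hy, rfl⟩
      exact proj_mem Γ hupper hdiag _ _ hy
    let n : Fin t × Fin t → ℕ := fun p =>
      Module.finrank k (Module.Dual k (V ⧸ U p))
    let B : (p : Fin t × Fin t) → Module.Basis (Fin (n p)) k (Module.Dual k (V ⧸ U p)) :=
      fun p => Module.finBasis k _
    let ψ : ((p : Fin t × Fin t) × Fin (n p)) → (V →ₗ[k] k) := fun e =>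
      (B e.1 e.2).comp ((U e.1).mkQ.comp (proj Γ e.1.1 e.1.2))
    let eqv : Fin (Fintype.card ((p : Fin t × Fin t) × Fin (n p))) ≃
        ((p : Fin t × Fin t) × Fin (n p)) :=
      (Fintype.equivFin _).symm
    have hproj0 : ∀ (a b i j : Fin t), ¬ (rep Γ i = a ∧ rep Γ j = b ∧ i < j) →
        proj Γ a b (Matrix.single i j (1 : k)) = 0 := by
      intro a b i j hcond
      ext i' j'
      rw [proj_apply, Matrix.zero_apply]
      split_ifs with hc
      · by_cases he : i = i' ∧ j = j'
        · exact absurd (he.1 ▸ he.2 ▸ hc) hcond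
        · show (if i = i' ∧ j = j' then (1 : k) else 0) = 0
          simp [he]
      · rfl
    have hψ0 : ∀ (e : (p : Fin t × Fin t) × Fin (n p)) (i j : Fin t),
        ¬ (rep Γ i = e.1.1 ∧ rep Γ j = e.1.2 ∧ i < j) →
        ψ e (Matrix.single i j (1 : k)) = 0 := by
      intro e i j hcond
      have h0 := hproj0 e.1.1 e.1.2 i j hcond
      simp [ψ, LinearMap.comp_apply, h0]
    have hsum : ∀ (e : (p : Fin t × Fin t) × Fin (n p)) (M : V),
        (∑ i : Fin t, ∑ j : Fin t, ψ e (Matrix.single i j 1) * M i j) = ψ e M := by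
      intro e M
      conv_rhs => rw [matrix_eq_sum_single M]
      rw [map_sum]
      refine Finset.sum_congr rfl fun i _ => ?_
      rw [map_sum]
      refine Finset.sum_congr rfl fun j _ => ?_
      have : Matrix.single i j (M i j) = (M i j) • Matrix.single i j (1 : k) := by
        rw [smul_single, smul_eq_mul, mul_one]
      rw [this, _root_.map_smul, smul_eq_mul, mul_comm]
    have hUmem : ∀ (p : Fin t × Fin t) (x : V),
        x ∈ U p ↔ ∀ l : Fin (n p), B p l ((U p).mkQ x) = 0 := by
      intro p x
      constructor
      · intro hx l
        have h0 : (U p).mkQ x = 0 := by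
          rw [Submodule.mkQ_apply]
          exact (Submodule.Quotient.mk_eq_zero _).mpr hx
        rw [h0, map_zero]
      · intro hl
        have hq : (U p).mkQ x = 0 := by
          rw [← Module.forall_dual_apply_eq_zero_iff k]
          intro φ
          have hrepr := (B p).sum_repr φ
          calc φ ((U p).mkQ x)
              = (∑ l, (B p).repr φ l • B p l) ((U p).mkQ x) := by rw [hrepr]
            _ = ∑ l, (B p).repr φ l • (B p l ((U p).mkQ x)) := by
                rw [LinearMap.sum_apply]
                exact Finset.sum_congr rfl fun l _ => rfl
            _ = 0 := by
                simp only [← Submodule.mkQ_apply, hl, smul_zero, Finset.sum_const_zero]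
        rw [Submodule.mkQ_apply] at hq
        exact (Submodule.Quotient.mk_eq_zero _).mp hq
    refine ⟨Fintype.card ((p : Fin t × Fin t) × Fin (n p)),
      fun m i j => ψ (eqv m) (Matrix.single i j 1), ?_, ?_, ?_⟩
    · intro l i j hne
      by_contra hlt
      exact hne (hψ0 (eqv l) i j (by tauto))
    · intro l i j i' j' h1 h2
      have key : ∀ i j : Fin t, ψ (eqv l) (Matrix.single i j 1) ≠ 0 →
          rep Γ i = (eqv l).1.1 ∧ rep Γ j = (eqv l).1.2 := by
        intro i j hne
        by_contra hc
        exact hne (hψ0 (eqv l) i j (by tauto))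
      obtain ⟨e1, e2⟩ := key i j h1
      obtain ⟨f1, f2⟩ := key i' j' h2
      exact ⟨rrel_of_rep_eq Γ (e1.trans f1.symm), rrel_of_rep_eq Γ (e2.trans f2.symm)⟩
    · intro M
      rw [SetLike.mem_coe]
      constructor
      · intro hM
        refine ⟨hupper M hM, fun i j hij => hij M hM, fun l => ?_⟩
        rw [hsum]
        have hmem : proj Γ (eqv l).1.1 (eqv l).1.2 M ∈ U (eqv l).1 :=
          ⟨M, hM, rfl⟩
        have h0 : ((U (eqv l).1).mkQ) (proj Γ (eqv l).1.1 (eqv l).1.2 M) = 0 := by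
          rw [Submodule.mkQ_apply]
          exact (Submodule.Quotient.mk_eq_zero _).mpr hmem
        simp [ψ, LinearMap.comp_apply, h0]
      · rintro ⟨h1, h2, h3⟩
        have hd : diagonal (fun i => M i i) ∈ Γ := diag_mem Γ hdiag _ h2
        have hp : ∀ p : Fin t × Fin t, proj Γ p.1 p.2 M ∈ Γ := by
          intro p
          have hU : proj Γ p.1 p.2 M ∈ U p := by
            rw [hUmem]
            intro l
            have h3' := h3 (eqv.symm ⟨p, l⟩)
            rw [hsum] at h3'
            rw [Equiv.apply_symm_apply] at h3'
            simpa [ψ, LinearMap.comp_apply] using h3'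
          exact hUle p hU
        rw [proj_sum Γ M h1]
        exact Γ.add_mem hd (Subalgebra.sum_mem _ fun a _ =>
          Subalgebra.sum_mem _ fun b _ => hp (a, b))
  · rintro ⟨r, hr, q, c, hlt, hrel, hmem⟩
    constructor
    · intro A hA i j hij
      exact ((hmem A).mp hA).1 i j hij
    · intro A hA
      have h := (hmem A).mp hA
      refine SetLike.mem_coe.mp ((hmem _).mpr ⟨?_, ?_, ?_⟩)
      · intro i j hij
        exact Matrix.diagonal_apply_ne _ (ne_of_gt hij)
      · intro i j hij
        simpa using h.2.1 i j hij
      · intro l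
        apply Finset.sum_eq_zero
        intro i _
        apply Finset.sum_eq_zero
        intro j _
        by_cases hij : i = j
        · subst hij
          have : c l i i = 0 := by
            by_contra hc
            exact lt_irrefl i (hlt l i i hc)
          rw [this, zero_mul]
        · rw [Matrix.diagonal_apply_ne _ hij, mul_zero]
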